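/- Let n ≥ 1, let f be a Hermitian complex n×n matrix, let g be an arbitrary nonzero complex n×n matrix, and let g* denote its conjugate transpose. Then ∫₀¹ Re trace(exp(−f)·g*·exp(−s·f)·g·exp(s·f)) ds > 0. In particular, the Kubo inner product ⟨g*;g⟩_f = Z⁻¹ ∫₀¹ trace(exp(−f)·g*·exp(−s·f)·g·exp(s·f)) ds with Z = Re trace(exp(−f)) is strictly positive for g ≠ 0. -/

import Mathlib

open Matrix MeasureTheory

private lemma real_smul_eq {n : ℕ} (c : ℝ) (f : Matrix (Fin n) (Fin n) ℂ) :
    c • f = (c : ℂ) • f := by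
  ext i j
  simp [Complex.real_smul]

private lemma herm_csmul {n : ℕ} {f : Matrix (Fin n) (Fin n) ℂ} (hf : f.IsHermitian) (c : ℝ) :
    ((c : ℝ) • f).IsHermitian := by
  rw [real_smul_eq]
  unfold Matrix.IsHermitian
  rw [Matrix.conjTranspose_smul, hf.eq]
  congr 1
  simp

private lemma trace_sq_re_pos {n : ℕ} {X : Matrix (Fin n) (Fin n) ℂ} (hX : X ≠ 0) :
    0 < (Matrix.trace (Xᴴ * X)).re := by
  have key : (Matrix.trace (Xᴴ * X)).re = ∑ i, ∑ j, Complex.normSq (X j i) := by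
    simp only [Matrix.trace, Matrix.diag, Matrix.mul_apply, Matrix.conjTranspose_apply]
    rw [Complex.re_sum]
    refine Finset.sum_congr rfl fun i _ => ?_
    rw [Complex.re_sum]
    refine Finset.sum_congr rfl fun j _ => ?_
    rw [show star (X j i) = (starRingEnd ℂ) (X j i) from rfl,
      ← Complex.normSq_eq_conj_mul_self]
    simp
  rw [key]
  obtain ⟨a, b, hab⟩ : ∃ a b, X a b ≠ 0 := by
    by_contra h
    push_neg at h
    exact hX (by ext a b; simpa using h a b)
  refine Finset.sum_pos' (fun i _ => Finset.sum_nonneg fun j _ => Complex.normSq_nonneg _) ?_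
  exact ⟨b, Finset.mem_univ _, Finset.sum_pos' (fun j _ => Complex.normSq_nonneg _)
    ⟨a, Finset.mem_univ _, by simpa using Complex.normSq_pos.mpr hab⟩⟩

private lemma mul_unit_ne_zero {n : ℕ} {a b g : Matrix (Fin n) (Fin n) ℂ}
    (ha : IsUnit a) (hb : IsUnit b) (hg : g ≠ 0) : b * g * a ≠ 0 := by
  intro h
  apply hg
  have h1 : b⁻¹ * (b * g * a) * a⁻¹ = g := by
    rw [Matrix.mul_assoc (b⁻¹) _ _, Matrix.mul_assoc _ a (a⁻¹),
      Matrix.mul_nonsing_inv _ ((Matrix.isUnit_iff_isUnit_det _).mp ha), Matrix.mul_one,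
      ← Matrix.mul_assoc, Matrix.nonsing_inv_mul _ ((Matrix.isUnit_iff_isUnit_det _).mp hb),
      Matrix.one_mul]
  rw [← h1, h, Matrix.mul_zero, Matrix.zero_mul]

private lemma pointwise_pos {n : ℕ} (f g : Matrix (Fin n) (Fin n) ℂ)
    (hf : f.IsHermitian) (hg : g ≠ 0) (s : ℝ) :
    0 < (Matrix.trace (NormedSpace.exp (-f) * gᴴ * NormedSpace.exp ((-s) • f) * g
      * NormedSpace.exp (s • f))).re := by
  set a := NormedSpace.exp (((s - 1) / 2 : ℝ) • f) with ha_def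
  set b := NormedSpace.exp ((-s / 2 : ℝ) • f) with hb_def
  have ha : a.IsHermitian := (herm_csmul hf _).exp
  have hb : b.IsHermitian := (herm_csmul hf _).exp
  have haU : IsUnit a := Matrix.isUnit_exp _
  have hbU : IsUnit b := Matrix.isUnit_exp _
  have hcomm : ∀ c d : ℝ, Commute (c • f) (d • f) := fun c d => by
    unfold Commute SemiconjBy
    rw [real_smul_eq, real_smul_eq, smul_mul_smul_comm, smul_mul_smul_comm, mul_comm (c:ℂ) (d:ℂ)]
  have e1 : NormedSpace.exp (s • f) * NormedSpace.exp (-f) = a * a := by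
    rw [← Matrix.exp_add_of_commute _ _ ]
    · rw [← Matrix.exp_add_of_commute _ _ (hcomm _ _)]
      congr 1
      have : -f = (-1 : ℝ) • f := by simp
      rw [this, ← add_smul, ← add_smul]
      congr 1
      ring_nf
    · have : -f = (-1 : ℝ) • f := by simp
      rw [this]; exact hcomm _ _
  have e2 : NormedSpace.exp ((-s) • f) = b * b := by
    rw [← Matrix.exp_add_of_commute _ _ (hcomm _ _), ← add_smul]
    congr 1
    ring_nf
  have key : Matrix.trace (NormedSpace.exp (-f) * gᴴ * NormedSpace.exp ((-s) • f) * g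
      * NormedSpace.exp (s • f)) = Matrix.trace ((b * g * a)ᴴ * (b * g * a)) := by
    rw [Matrix.trace_mul_comm, ← Matrix.mul_assoc, ← Matrix.mul_assoc, ← Matrix.mul_assoc, e1, e2]
    have : (b * g * a)ᴴ = a * gᴴ * b := by
      rw [Matrix.conjTranspose_mul, Matrix.conjTranspose_mul, ha.eq, hb.eq, Matrix.mul_assoc]
    rw [this]
    have lhs_eq : a * a * gᴴ * (b * b) * g = a * (a * (gᴴ * (b * (b * g)))) := by
      simp only [Matrix.mul_assoc]
    have rhs_eq : a * gᴴ * b * (b * g * a) = (a * (gᴴ * (b * (b * g)))) * a := by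
      simp only [Matrix.mul_assoc]
    rw [lhs_eq, rhs_eq, Matrix.trace_mul_comm]
  rw [key]
  exact trace_sq_re_pos (mul_unit_ne_zero haU hbU hg)

theorem kubo_inner_product_positive_definite
    {n : ℕ} (hn : 1 ≤ n)
    (f g : Matrix (Fin n) (Fin n) ℂ)
    (hf : f.IsHermitian) (hg : g ≠ 0) :
    (0 < ∫ s in (0:ℝ)..1,
        (Matrix.trace (NormedSpace.exp (-f) * gᴴ * NormedSpace.exp ((-s) • f) * g
          * NormedSpace.exp (s • f))).re) ∧
      0 < ((Matrix.trace (NormedSpace.exp (-f))).re)⁻¹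
          * ∫ s in (0:ℝ)..1,
              (Matrix.trace (NormedSpace.exp (-f) * gᴴ * NormedSpace.exp ((-s) • f) * g
                * NormedSpace.exp (s • f))).re := by
  letI : SeminormedRing (Matrix (Fin n) (Fin n) ℂ) := Matrix.linftyOpSemiNormedRing
  letI : NormedRing (Matrix (Fin n) (Fin n) ℂ) := Matrix.linftyOpNormedRing
  letI : NormedAlgebra ℂ (Matrix (Fin n) (Fin n) ℂ) := Matrix.linftyOpNormedAlgebra
  have hcont : Continuous fun s : ℝ =>
      (Matrix.trace (NormedSpace.exp (-f) * gᴴ * NormedSpace.exp ((-s) • f) * g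
        * NormedSpace.exp (s • f))).re := by
    apply Complex.continuous_re.comp
    apply Continuous.matrix_trace
    apply Continuous.mul
    apply Continuous.mul
    · exact (continuous_const.mul
        ((show Continuous (NormedSpace.exp : Matrix (Fin n) (Fin n) ℂ → _) from continuous_iff_continuousAt.2 fun x => (NormedSpace.exp_analytic (𝕂 := ℂ) x).continuousAt).comp ((continuous_neg.smul continuous_const))))
    · exact continuous_const
    · exact (show Continuous (NormedSpace.exp : Matrix (Fin n) (Fin n) ℂ → _) from continuous_iff_continuousAt.2 fun x => (NormedSpace.exp_analytic (𝕂 := ℂ) x).continuousAt).comp (continuous_id.smul continuous_const)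
  have hint : 0 < ∫ s in (0:ℝ)..1,
      (Matrix.trace (NormedSpace.exp (-f) * gᴴ * NormedSpace.exp ((-s) • f) * g
        * NormedSpace.exp (s • f))).re :=
    intervalIntegral.intervalIntegral_pos_of_pos (hcont.intervalIntegrable 0 1)
      (fun s => pointwise_pos f g hf hg s) one_pos
  refine ⟨hint, mul_pos (inv_pos.mpr ?_) hint⟩
  · -- 0 < re trace exp(-f)
    have hx : (-f) = ((-1/2 : ℝ) • f) + ((-1/2 : ℝ) • f) := by
      rw [← add_smul]; norm_num
    set X := NormedSpace.exp ((-1/2 : ℝ) • f) with hX_def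
    have hXh : X.IsHermitian := (herm_csmul hf _).exp
    have hXU : IsUnit X := Matrix.isUnit_exp _
    have he : NormedSpace.exp (-f) = Xᴴ * X := by
      rw [hx, Matrix.exp_add_of_commute _ _ (Commute.refl _), hXh.eq]
    rw [he]
    apply trace_sq_re_pos
    intro h0
    have h1 : (1 : Matrix (Fin n) (Fin n) ℂ) = X * X⁻¹ :=
      (Matrix.mul_nonsing_inv _ ((Matrix.isUnit_iff_isUnit_det _).mp hXU)).symm
    rw [h0, Matrix.zero_mul] at h1
    have : (1 : Matrix (Fin n) (Fin n) ℂ) ⟨0, hn⟩ ⟨0, hn⟩ = 0 := by rw [h1]; rfl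
    simp [Matrix.one_apply] at this
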